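/- arXiv:2403.08190 — 3 statements merged into one kernel-verified Lean document; each statement's English description precedes it below -/
import Mathlib

section
/- Let π : E ⥤ B be a functor between categories and f : e ⟶ e' a morphism of E. Then f is strongly cocartesian if and only if for every object m : x ⟶ y of the arrow category Arrow E and every morphism α : k_π.obj f ⟶ k_π.obj m in Comma π (𝟭 B), there exists a unique morphism β : f ⟶ m in Arrow E with k_π.map β = α. -/
open CategoryTheory

universe v₁ v₂ u₁ u₂

variable {E : Type u₁} {B : Type u₂} [Category.{v₁} E] [Category.{v₂} B]

/-- A morphism `f : e ⟶ e'` is *strongly cocartesian* for `π : E ⥤ B` if every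
`h : e ⟶ e''` together with a factorization `π.map h = π.map f ≫ v` of its image
admits a unique lift `g : e' ⟶ e''` with `π.map g = v` and `f ≫ g = h`. -/
def StronglyCocartesian (π : E ⥤ B) {e e' : E} (f : e ⟶ e') : Prop :=
  ∀ {e'' : E} (h : e ⟶ e'') (v : π.obj e' ⟶ π.obj e''),
    π.map h = π.map f ≫ v → ∃! g : e' ⟶ e'', π.map g = v ∧ f ≫ g = h

/-- The canonical functor `k_π : Arrow E ⥤ Comma π (𝟭 B)` sending `f : e ⟶ e'`
to `(e, π.obj e', π.map f)`. -/
@[simps]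
def kFunctor (π : E ⥤ B) : Arrow E ⥤ Comma π (𝟭 B) where
  obj f := { left := f.left, right := π.obj f.right, hom := π.map f.hom }
  map {f g} sq :=
    { left := sq.left
      right := π.map sq.right
      w := by
        dsimp
        rw [← π.map_comp, ← π.map_comp, Arrow.w] }

/-- **Characterization of cocartesian arrows via the canonical functor to the comma
category.** A morphism `f` of `E` is strongly cocartesian iff every morphism
`k_π.obj f ⟶ k_π.obj m` of `Comma π (𝟭 B)` has a unique lift `f ⟶ m` in `Arrow E`. -/
theorem stronglyCocartesian_iff_unique_lifts (π : E ⥤ B) {e e' : E} (f : e ⟶ e') :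
    StronglyCocartesian π f ↔
      ∀ (m : Arrow E) (a : (kFunctor π).obj (Arrow.mk f) ⟶ (kFunctor π).obj m),
        ∃! β : Arrow.mk f ⟶ m, (kFunctor π).map β = a := by
  constructor
  · intro hf m a
    have hw : π.map (a.left ≫ m.hom) = π.map f ≫ a.right := by
      have := a.w
      simp at this ⊢
      exact (Functor.map_comp π _ _).trans this
    obtain ⟨g, ⟨hg1, hg2⟩, hg3⟩ := hf (a.left ≫ m.hom) a.right hw
    refine ⟨⟨a.left, g, by exact hg2.symm⟩, ?_, ?_⟩
    · ext
      · rfl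
      · exact hg1
    · intro β hβ
      have h1 : β.left = a.left := congrArg CommaMorphism.left hβ
      have h2 : π.map β.right = a.right := congrArg CommaMorphism.right hβ
      have h3 : f ≫ β.right = a.left ≫ m.hom := by
        have h4 : f ≫ β.right = β.left ≫ m.hom := by simpa using (Arrow.w β).symm
        rw [h4, h1]
        rfl
      ext
      · exact h1
      · exact hg3 β.right ⟨h2, h3⟩
  · intro H e'' h v hv
    have hw : π.map h ≫ (𝟭 B).map (𝟙 (π.obj e'')) = π.map f ≫ v := by simpa using hv
    obtain ⟨β, hβ1, hβ2⟩ := H (Arrow.mk (𝟙 e''))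
      ⟨h, v, by show π.map h ≫ π.map (𝟙 e'') = π.map f ≫ v; rw [π.map_id, Category.comp_id]; exact hv⟩
    refine ⟨β.right, ⟨congrArg CommaMorphism.right hβ1, ?_⟩, ?_⟩
    · have h4 : f ≫ β.right = β.left := by simpa using (Arrow.w β).symm
      rw [h4]
      exact congrArg CommaMorphism.left hβ1
    · intro g' ⟨hg1, hg2⟩
      have := hβ2 ⟨h, g', by simpa using hg2.symm⟩ (by ext; exacts [rfl, hg1])
      simpa using congrArg CommaMorphism.right this
end

section
/- Let ξ : F ⥤ A and π : E ⥤ B be cloven Grothendieck opfibrations, and let α : A ⥤ B, φ : F ⥤ E be functors with φ ⋙ π = ξ ⋙ α. Then the pair (α, φ) is a cocartesian functor (φ maps strongly cocartesian morphisms of F to strongly cocartesian morphisms of E) if and only if for every e : F and every u : ξ.obj e ⟶ a, the unique comparison morphism c : (α.map u)_!(φ.obj e) ⟶ φ.obj (u_! e) lying over the identity and satisfying lift_π(φ.obj e, α.map u) ≫ c = φ.map (lift_ξ(e, u)) is an isomorphism. -/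
open CategoryTheory

universe v₁ v₂ v₃ v₄ u₁ u₂ u₃ u₄

section Defs

variable {E : Type u₁} {B : Type u₂} [Category.{v₁} E] [Category.{v₂} B]

/-- A *cleavage* for `π : E ⥤ B`: for every `e : E` and `u : π.obj e ⟶ b` a chosen
strongly cocartesian lift `map e u : e ⟶ obj e u` with `π.obj (obj e u) = b` and
`π.map (map e u) = u` (modulo `eqToHom`). `π` is a cloven Grothendieck opfibration
iff it admits such a cleavage. -/
structure Cleavage (π : E ⥤ B) where
  obj : ∀ {b : B} (e : E), (π.obj e ⟶ b) → E
  map : ∀ {b : B} (e : E) (u : π.obj e ⟶ b), e ⟶ obj e u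
  obj_proj : ∀ {b : B} (e : E) (u : π.obj e ⟶ b), π.obj (obj e u) = b
  map_proj : ∀ {b : B} (e : E) (u : π.obj e ⟶ b),
    π.map (map e u) = u ≫ eqToHom (obj_proj e u).symm
  cocart : ∀ {b : B} (e : E) (u : π.obj e ⟶ b), StronglyCocartesian π (map e u)

/-- A fibered functor `(α, φ)` from `ξ : F ⥤ A` to `π : E ⥤ B` is a *cocartesian
functor* if `φ` maps strongly cocartesian morphisms of `F` to strongly cocartesian
morphisms of `E`. -/
def CocartesianFunctor {F : Type u₃} {A : Type u₄} [Category.{v₃} F] [Category.{v₄} A]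
    (ξ : F ⥤ A) (π : E ⥤ B) (φ : F ⥤ E) : Prop :=
  ∀ {e e' : F} (m : e ⟶ e'), StronglyCocartesian ξ m → StronglyCocartesian π (φ.map m)

end Defs


section Aux

variable {E : Type u₁} {B : Type u₂} [Category.{v₁} E] [Category.{v₂} B] {π : E ⥤ B}

lemma StronglyCocartesian.comp_iso {e e' e'' : E} {f : e ⟶ e'}
    (hf : StronglyCocartesian π f) (g : e' ⟶ e'') [IsIso g] :
    StronglyCocartesian π (f ≫ g) := by
  intro x h v hv
  obtain ⟨k, ⟨hk1, hk2⟩, hk3⟩ := hf h (π.map g ≫ v)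
    (by rw [hv, π.map_comp, Category.assoc])
  refine ⟨inv g ≫ k, ⟨?_, ?_⟩, ?_⟩
  · rw [π.map_comp, hk1, ← Category.assoc, ← π.map_comp, IsIso.inv_hom_id, π.map_id,
      Category.id_comp]
  · rw [Category.assoc, ← Category.assoc g, IsIso.hom_inv_id, Category.id_comp, hk2]
  · rintro y ⟨hy1, hy2⟩
    rw [IsIso.eq_inv_comp]
    refine hk3 (g ≫ y) ⟨by rw [π.map_comp, hy1], by rw [← Category.assoc]; exact hy2⟩

lemma isIso_of_comparison {x y y' : E} {f : x ⟶ y} {f' : x ⟶ y'}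
    (hf : StronglyCocartesian π f) (hf' : StronglyCocartesian π f')
    (hobj : π.obj y = π.obj y') (c : y ⟶ y') (hc : π.map c = eqToHom hobj)
    (hcomp : f ≫ c = f') : IsIso c := by
  obtain ⟨c', ⟨hc'1, hc'2⟩, _⟩ := hf' f (eqToHom hobj.symm)
    (by rw [← hcomp, π.map_comp, hc, Category.assoc, eqToHom_trans, eqToHom_refl,
      Category.comp_id])
  refine ⟨c', ?_, ?_⟩
  · obtain ⟨k, _, hk⟩ := hf f (𝟙 _) (by simp)
    rw [hk (c ≫ c') ⟨by rw [π.map_comp, hc, hc'1, eqToHom_trans, eqToHom_refl],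
        by rw [← Category.assoc, hcomp, hc'2]⟩,
      hk (𝟙 _) ⟨by simp, by simp⟩]
  · obtain ⟨k, _, hk⟩ := hf' f' (𝟙 _) (by simp)
    rw [hk (c' ≫ c) ⟨by rw [π.map_comp, hc'1, hc, eqToHom_trans, eqToHom_refl],
        by rw [← Category.assoc, hc'2, hcomp]⟩,
      hk (𝟙 _) ⟨by simp, by simp⟩]

end Aux

/-- **Naturality of cocartesian functors.** Given cloven Grothendieck opfibrations
`ξ : F ⥤ A` and `π : E ⥤ B` and a fibered functor `(α, φ)` with `φ ⋙ π = ξ ⋙ α`,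
the pair `(α, φ)` is a cocartesian functor iff for every `e : F` and `u : ξ.obj e ⟶ a`
the unique comparison morphism `c : (α.map u)₍φ.obj e₎ ⟶ φ.obj (u₍e₎)` lying over the
identity and compatible with the chosen cocartesian lifts is an isomorphism. -/
theorem cocartesianFunctor_iff_comparison_isIso
    {F : Type u₁} {A : Type u₂} {E : Type u₃} {B : Type u₄}
    [Category.{v₁} F] [Category.{v₂} A] [Category.{v₃} E] [Category.{v₄} B]
    (ξ : F ⥤ A) (π : E ⥤ B) (α : A ⥤ B) (φ : F ⥤ E)
    (cξ : Cleavage ξ) (cπ : Cleavage π)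
    (heq : φ ⋙ π = ξ ⋙ α) :
    CocartesianFunctor ξ π φ ↔
      ∀ {a : A} (e : F) (u : ξ.obj e ⟶ a)
        (c : cπ.obj (φ.obj e) (eqToHom (Functor.congr_obj heq e) ≫ α.map u) ⟶
          φ.obj (cξ.obj e u)),
        π.map c =
          eqToHom ((cπ.obj_proj (φ.obj e)
              (eqToHom (Functor.congr_obj heq e) ≫ α.map u)).trans
            ((Functor.congr_obj heq (cξ.obj e u)).trans
              (congrArg α.obj (cξ.obj_proj e u))).symm) →
        cπ.map (φ.obj e) (eqToHom (Functor.congr_obj heq e) ≫ α.map u) ≫ c =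
          φ.map (cξ.map e u) →
        IsIso c := by
  constructor
  · intro hcoc a e u c hc hcomp
    exact isIso_of_comparison (cπ.cocart _ _) (hcoc _ (cξ.cocart e u)) _ c hc hcomp
  · intro hiso e e' m hm
    -- the chosen lift over ξ.map m
    set u := ξ.map m with hu
    set ℓ := cξ.map e u with hℓ
    -- comparison iso j : cξ.obj e u ≅ e'
    obtain ⟨j, ⟨hj1, hj2⟩, _⟩ := (cξ.cocart e u) m (eqToHom (cξ.obj_proj e u))
      (by rw [cξ.map_proj, Category.assoc, eqToHom_trans, eqToHom_refl, Category.comp_id])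
    have hjiso : IsIso j := isIso_of_comparison (cξ.cocart e u) hm _ j hj1 hj2
    -- comparison morphism c between the chosen π-lift and φ.map ℓ
    have hπℓ : π.map (φ.map ℓ) =
        π.map (cπ.map (φ.obj e) (eqToHom (Functor.congr_obj heq e) ≫ α.map u)) ≫
          eqToHom ((cπ.obj_proj (φ.obj e)
              (eqToHom (Functor.congr_obj heq e) ≫ α.map u)).trans
            ((Functor.congr_obj heq (cξ.obj e u)).trans
              (congrArg α.obj (cξ.obj_proj e u))).symm) := by
      have := Functor.congr_hom heq ℓ
      simp only [Functor.comp_map] at this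
      rw [this, cξ.map_proj, cπ.map_proj]
      simp [eqToHom_map]
    obtain ⟨c, ⟨hc1, hc2⟩, _⟩ := (cπ.cocart (φ.obj e)
      (eqToHom (Functor.congr_obj heq e) ≫ α.map u)) (φ.map ℓ) _ hπℓ
    have hciso : IsIso c := hiso e u c hc1 hc2
    have hφℓ : StronglyCocartesian π (φ.map ℓ) := by
      rw [← hc2]; exact StronglyCocartesian.comp_iso (cπ.cocart _ _) c
    have : φ.map m = φ.map ℓ ≫ φ.map j := by rw [← φ.map_comp, hj2]
    rw [this]
    exact fun {x} h v hv => StronglyCocartesian.comp_iso hφℓ (φ.map j) h v hv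
end

section
/- Let ξ : F ⥤ A and π : E ⥤ B be cloven Grothendieck opfibrations, and let α : A ⥤ B, φ : F ⥤ E be functors with φ ⋙ π = ξ ⋙ α. Let χ_ξ ⊣ k_ξ and χ_π ⊣ k_π be left-adjoint-right-inverse adjunctions as in the Chevalley criterion (k_ξ : Arrow F ⥤ Comma ξ (𝟭 A) and k_π : Arrow E ⥤ Comma π (𝟭 B) the canonical functors, χ_ξ and χ_π left adjoints with invertible units). Let Arrow(φ) : Arrow F ⥤ Arrow E and Φ : Comma ξ (𝟭 A) ⥤ Comma π (𝟭 B) be the functors induced by (φ, α), which satisfy Arrow(φ) ⋙ k_π = k_ξ ⋙ Φ. Then (α, φ) is a cocartesian functor (φ maps strongly cocartesian morphisms to strongly cocartesian morphisms) if and only if the mate of this commutative square — the natural transformation with component at x : Comma ξ (𝟭 A) given by transposing, from χ_π.obj (Φ.obj x) to Arrow(φ).obj (χ_ξ.obj x), constructed from the unit of χ_ξ ⊣ k_ξ and the counit of χ_π ⊣ k_π — is a natural isomorphism. -/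
open CategoryTheory

universe v₁ v₂ v₃ v₄ u₁ u₂ u₃ u₄

section Defs

variable {E : Type u₁} {B : Type u₂} [Category.{v₁} E] [Category.{v₂} B]

variable {F : Type u₃} {A : Type u₄} [Category.{v₃} F] [Category.{v₄} A]

/-- The functor `Comma ξ (𝟭 A) ⥤ Comma π (𝟭 B)` induced by a fibered functor `(α, φ)`. -/
@[simps]
def commaMapFunctor (ξ : F ⥤ A) (π : E ⥤ B) (α : A ⥤ B) (φ : F ⥤ E)
    (heq : φ ⋙ π = ξ ⋙ α) : Comma ξ (𝟭 A) ⥤ Comma π (𝟭 B) where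
  obj x :=
    { left := φ.obj x.left
      right := α.obj x.right
      hom := eqToHom (Functor.congr_obj heq x.left) ≫ α.map x.hom }
  map {x y} m :=
    { left := φ.map m.left
      right := α.map m.right
      w := by
        have h := Functor.congr_hom heq m.left
        simp only [Functor.comp_map] at h
        dsimp
        rw [h]
        simp only [Category.assoc, eqToHom_trans_assoc, eqToHom_refl, Category.id_comp]
        rw [← α.map_comp, ← α.map_comp]
        have hw := m.w
        simp only [Functor.id_map] at hw
        rw [hw] }
  map_id x := by apply CommaMorphism.ext <;> simp
  map_comp m m' := by apply CommaMorphism.ext <;> simp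

end Defs


section Aux

theorem my_isIso_of_precomp_bijective {C : Type*} [Category C] {X Y : C} (w : X ⟶ Y)
    (h : ∀ Z : C, Function.Bijective (fun u : Y ⟶ Z => w ≫ u)) : IsIso w := by
  obtain ⟨v, hv⟩ := (h X).2 (𝟙 X)
  simp only at hv
  refine ⟨v, hv, (h Y).1 ?_⟩
  simp only
  rw [← Category.assoc, hv, Category.id_comp, Category.comp_id]

theorem my_stronglyCocartesian_iff_bijective {E : Type u₁} {B : Type u₂}
    [Category.{v₁} E] [Category.{v₂} B] (π : E ⥤ B) (f : Arrow E) :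
    StronglyCocartesian π f.hom ↔
      ∀ g : Arrow E, Function.Bijective (fun u : f ⟶ g => (kFunctor π).map u) := by
  constructor
  · intro hf g
    constructor
    · intro u u' huu
      simp only at huu
      have hl : u.left = u'.left := by
        have := congrArg CommaMorphism.left huu; exact this
      have hr : π.map u.right = π.map u'.right := by
        have := congrArg CommaMorphism.right huu; exact this
      obtain ⟨t, -, ht⟩ := hf (f.hom ≫ u.right) (π.map u.right) (by rw [π.map_comp])
      have h1 : u.right = t := ht u.right ⟨rfl, rfl⟩
      have h2 : u'.right = t := ht u'.right ⟨hr.symm, by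
        rw [← Arrow.w u', ← Arrow.w u, hl]⟩
      exact CommaMorphism.ext hl (h1.trans h2.symm)
    · intro c
      have hw : π.map c.left ≫ π.map g.hom = π.map f.hom ≫ c.right := by
        have := c.w; simp at this; exact this
      obtain ⟨t, ⟨ht1, ht2⟩, -⟩ := hf (c.left ≫ g.hom) c.right
        ((π.map_comp _ _).trans hw)
      refine ⟨Arrow.homMk (u := c.left) (v := t) ht2.symm, ?_⟩
      exact CommaMorphism.ext rfl ht1
  · intro hb e'' h v hv
    have cw : π.map h ≫ ((kFunctor π).obj (Arrow.mk (𝟙 e''))).hom =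
        ((kFunctor π).obj f).hom ≫ (𝟭 B).map v := by
      have := hv; rw [← Category.comp_id (π.map h), ← π.map_id] at this; exact this
    obtain ⟨u, hu⟩ := (hb (Arrow.mk (𝟙 e''))).2 ⟨h, v, cw⟩
    simp only at hu
    have hul : u.left = h := by
      have := congrArg CommaMorphism.left hu; exact this
    have hur : π.map u.right = v := by
      have := congrArg CommaMorphism.right hu; exact this
    refine ⟨u.right, ⟨hur, ?_⟩, ?_⟩
    · have := Arrow.w u
      simp only [Arrow.mk_hom, Category.comp_id] at this
      rw [← this, hul]; simp
    · rintro t ⟨ht1, ht2⟩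
      have w' : h ≫ (Arrow.mk (𝟙 e'')).hom = f.hom ≫ t := by
        simpa using ht2.symm
      have heqm : Arrow.homMk (u := h) (v := t) w' = u := by
        apply (hb (Arrow.mk (𝟙 e''))).1
        simp only
        rw [hu]
        exact CommaMorphism.ext rfl ht1
      have := congrArg CommaMorphism.right heqm
      simpa using this

theorem my_stronglyCocartesian_iff_isIso_counit {E : Type u₁} {B : Type u₂}
    [Category.{v₁} E] [Category.{v₂} B] (π : E ⥤ B)
    {χ : Comma π (𝟭 B) ⥤ Arrow E} (adj : χ ⊣ kFunctor π) (f : Arrow E) :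
    StronglyCocartesian π f.hom ↔ IsIso (adj.counit.app f) := by
  rw [my_stronglyCocartesian_iff_bijective]
  have key : ∀ g : Arrow E, (fun u : f ⟶ g => adj.counit.app f ≫ u) =
      (adj.homEquiv ((kFunctor π).obj f) g).symm ∘
        (fun u : f ⟶ g => (kFunctor π).map u) := by
    intro g; funext u
    simp only [Function.comp_apply, Adjunction.homEquiv_counit]
    have := adj.counit.naturality u
    simp only [Functor.comp_map, Functor.id_map] at this
    exact this.symm
  constructor
  · intro h
    apply my_isIso_of_precomp_bijective
    intro g
    show Function.Bijective (fun u : f ⟶ g => adj.counit.app f ≫ u)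
    rw [key g]
    exact (Equiv.bijective _).comp (h g)
  · intro hi g
    have key2 : (fun u : f ⟶ g => (kFunctor π).map u) =
        (adj.homEquiv ((kFunctor π).obj f) g) ∘
          (fun u : f ⟶ g => adj.counit.app f ≫ u) := by
      rw [key g]; funext u; simp
    rw [key2]
    refine (Equiv.bijective _).comp ?_
    constructor
    · intro a b hab
      simp only at hab
      simpa using congrArg (fun z => inv (adj.counit.app f) ≫ z) hab
    · intro z
      exact ⟨inv (adj.counit.app f) ≫ z, by simp⟩

theorem my_isIso_app_of_isIso_app {C : Type*} {D : Type*} [Category C] [Category D]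
    {G H : C ⥤ D} (τ : G ⟶ H) {g g' : C} (i : g ⟶ g') [IsIso i]
    (h : IsIso (τ.app g)) : IsIso (τ.app g') := by
  haveI := h
  have h2 : τ.app g' = inv (G.map i) ≫ τ.app g ≫ H.map i := by
    rw [← τ.naturality i, IsIso.inv_hom_id_assoc]
  rw [h2]
  infer_instance

end Aux

/-- **Chevalley criterion for cocartesian functors.** Let `ξ : F ⥤ A` and `π : E ⥤ B`
be cloven Grothendieck opfibrations, `(α, φ)` a fibered functor with `φ ⋙ π = ξ ⋙ α`,
and `χ_ξ ⊣ k_ξ`, `χ_π ⊣ k_π` left-adjoint-right-inverse adjunctions as in the Chevalley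
criterion. Then `(α, φ)` is a cocartesian functor iff the mate of the commutative square
`Arrow(φ) ⋙ k_π = k_ξ ⋙ Φ` is a natural isomorphism, i.e. iff each of its components —
obtained by transposing via the unit of `χ_ξ ⊣ k_ξ` and the counit of `χ_π ⊣ k_π` —
is an isomorphism. -/
theorem cocartesianFunctor_iff_chevalley_mate_isIso
    {F : Type u₁} {A : Type u₂} {E : Type u₃} {B : Type u₄}
    [Category.{v₁} F] [Category.{v₂} A] [Category.{v₃} E] [Category.{v₄} B]
    (ξ : F ⥤ A) (π : E ⥤ B) (α : A ⥤ B) (φ : F ⥤ E)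
    (cξ : Cleavage ξ) (cπ : Cleavage π)
    (heq : φ ⋙ π = ξ ⋙ α)
    (χξ : Comma ξ (𝟭 A) ⥤ Arrow F) (adjξ : χξ ⊣ kFunctor ξ) (hξ : IsIso adjξ.unit)
    (χπ : Comma π (𝟭 B) ⥤ Arrow E) (adjπ : χπ ⊣ kFunctor π) (hπ : IsIso adjπ.unit)
    (hsq : φ.mapArrow ⋙ kFunctor π = kFunctor ξ ⋙ commaMapFunctor ξ π α φ heq) :
    CocartesianFunctor ξ π φ ↔
      ∀ x : Comma ξ (𝟭 A),
        IsIso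
          (χπ.map ((commaMapFunctor ξ π α φ heq).map (adjξ.unit.app x) ≫
              eqToHom (Functor.congr_obj hsq (χξ.obj x)).symm) ≫
            adjπ.counit.app (φ.mapArrow.obj (χξ.obj x))) := by
  haveI := hξ
  constructor
  · intro hc x
    have h1 : IsIso (adjξ.counit.app (χξ.obj x)) := by
      have tri := adjξ.left_triangle_components x
      have hinv : inv (χξ.map (adjξ.unit.app x)) = adjξ.counit.app (χξ.obj x) :=
        IsIso.inv_eq_of_hom_inv_id tri
      rw [← hinv]; infer_instance
    have hsc : StronglyCocartesian ξ (χξ.obj x).hom :=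
      (my_stronglyCocartesian_iff_isIso_counit ξ adjξ (χξ.obj x)).2 h1
    have hsc' : StronglyCocartesian π (φ.map (χξ.obj x).hom) := hc _ hsc
    haveI h2 : IsIso (adjπ.counit.app (φ.mapArrow.obj (χξ.obj x))) :=
      (my_stronglyCocartesian_iff_isIso_counit π adjπ (φ.mapArrow.obj (χξ.obj x))).1 hsc'
    infer_instance
  · intro hm e e' m hsc
    have hx := hm ((kFunctor ξ).obj (Arrow.mk m))
    haveI := hx
    haveI hc1 : IsIso (χπ.map
        ((commaMapFunctor ξ π α φ heq).map (adjξ.unit.app ((kFunctor ξ).obj (Arrow.mk m))) ≫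
          eqToHom (Functor.congr_obj hsq (χξ.obj ((kFunctor ξ).obj (Arrow.mk m)))).symm)) :=
      inferInstance
    have h2 : IsIso (adjπ.counit.app
        (φ.mapArrow.obj (χξ.obj ((kFunctor ξ).obj (Arrow.mk m))))) := by
      have := IsIso.of_isIso_comp_left (χπ.map
        ((commaMapFunctor ξ π α φ heq).map (adjξ.unit.app ((kFunctor ξ).obj (Arrow.mk m))) ≫
          eqToHom (Functor.congr_obj hsq (χξ.obj ((kFunctor ξ).obj (Arrow.mk m)))).symm))
        (adjπ.counit.app (φ.mapArrow.obj (χξ.obj ((kFunctor ξ).obj (Arrow.mk m)))))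
      exact this
    haveI hcm : IsIso (adjξ.counit.app (Arrow.mk m)) :=
      (my_stronglyCocartesian_iff_isIso_counit ξ adjξ (Arrow.mk m)).1 hsc
    have h3 : IsIso (adjπ.counit.app (φ.mapArrow.obj (Arrow.mk m))) :=
      my_isIso_app_of_isIso_app adjπ.counit
        (φ.mapArrow.map (adjξ.counit.app (Arrow.mk m))) h2
    have h4 : StronglyCocartesian π (φ.mapArrow.obj (Arrow.mk m)).hom :=
      (my_stronglyCocartesian_iff_isIso_counit π adjπ (φ.mapArrow.obj (Arrow.mk m))).2 h3
    intro e'' h v hv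
    exact h4 h v hv
end
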